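/- Let Ω be a second countable Hausdorff space, T a positive strong Feller kernel operator on B_b(Ω), and μ a strictly positive, finite, T-invariant Borel measure. Then for every x ∈ Ω there exists a finite positive Borel measure μ_x on Ω such that (T²f)(x) = ∫_Ω f dμ_x for all f ∈ B_b(Ω). -/

import Mathlib

open MeasureTheory Filter Topology Set
open scoped ENNReal symmDiff

namespace StrongFellerAux

variable {Ω : Type*} [MeasurableSpace Ω]

/-- Wrapper type for measurable sets (avoids inherited instances on the subtype). -/
structure MSet (Ω : Type*) [MeasurableSpace Ω] where
  carrier : Set Ω
  meas : MeasurableSet carrier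

/-- Pseudo-emetric on measurable sets given by the measure of the symmetric difference. -/
noncomputable def msetPEMS (μ : Measure Ω) :
    PseudoEMetricSpace (MSet Ω) where
  edist s t := μ (s.carrier ∆ t.carrier)
  edist_self s := by simp
  edist_comm s t := by simp [symmDiff_comm]
  edist_triangle s t u := by
    refine le_trans (measure_mono (symmDiff_triangle s.carrier t.carrier u.carrier)) ?_
    exact measure_union_le _ _

theorem edist_mset (μ : Measure Ω) (s t : MSet Ω) :
    @edist _ (msetPEMS μ).toEDist s t = μ (s.carrier ∆ t.carrier) := rfl

theorem msetComplete (μ : Measure Ω) [IsFiniteMeasure μ] :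
    @CompleteSpace _ (msetPEMS μ).toUniformSpace := by
  letI := msetPEMS μ
  apply EMetric.complete_of_convergent_controlled_sequences (fun n => (2 : ℝ≥0∞)⁻¹ ^ n)
    (fun n => ENNReal.pow_pos (by norm_num) n)
  intro u hu
  set A : Set Ω := ⋂ N, ⋃ n, (u (N + n)).carrier with hA
  have hAmeas : MeasurableSet A :=
    MeasurableSet.iInter fun N => MeasurableSet.iUnion fun n => (u (N + n)).meas
  refine ⟨⟨A, hAmeas⟩, ?_⟩
  -- key inclusion
  have hincl : ∀ N : ℕ, (u N).carrier ∆ A ⊆ ⋃ k, ((u (N + k)).carrier ∆ (u (N + k + 1)).carrier) := by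
    intro N y hy
    by_contra hnot
    simp only [Set.mem_iUnion, not_exists] at hnot
    have hsame : ∀ k : ℕ, y ∈ (u (N + k)).carrier ↔ y ∈ (u N).carrier := by
      intro k
      induction k with
      | zero => rfl
      | succ k ih =>
        have h1 := hnot k
        rw [Set.mem_symmDiff] at h1
        push_neg at h1
        have : N + (k + 1) = N + k + 1 := by omega
        rw [this]
        tauto
    rw [Set.mem_symmDiff] at hy
    rcases hy with ⟨hyN, hyA⟩ | ⟨hyA, hyN⟩
    · rw [hA] at hyA
      simp only [Set.mem_iInter, Set.mem_iUnion, not_forall, not_exists] at hyA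
      obtain ⟨M, hM⟩ := hyA
      rcases le_total M N with h | h
      · exact hM (N - M) (by rw [show M + (N - M) = N by omega]; exact hyN)
      · exact hM 0 (by rw [show M + 0 = N + (M - N) by omega]; exact (hsame (M - N)).mpr hyN)
    · rw [hA] at hyA
      have := Set.mem_iInter.mp hyA N
      obtain ⟨n, hn⟩ := Set.mem_iUnion.mp this
      exact hyN ((hsame n).mp hn)
  -- distance estimate
  have hest : ∀ N : ℕ, edist (u N) ⟨A, hAmeas⟩ ≤ (2 : ℝ≥0∞)⁻¹ ^ N * 2 := by
    intro N
    rw [edist_mset]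
    calc μ ((u N).carrier ∆ A) ≤ μ (⋃ k, ((u (N + k)).carrier ∆ (u (N + k + 1)).carrier)) :=
          measure_mono (hincl N)
      _ ≤ ∑' k, μ ((u (N + k)).carrier ∆ (u (N + k + 1)).carrier) := measure_iUnion_le _
      _ ≤ ∑' k : ℕ, (2 : ℝ≥0∞)⁻¹ ^ (N + k) := by
          refine ENNReal.tsum_le_tsum fun k => ?_
          exact le_of_lt (hu (N + k) (N + k) (N + k + 1) le_rfl (by omega))
      _ = (2 : ℝ≥0∞)⁻¹ ^ N * 2 := by
          simp only [pow_add, ENNReal.tsum_mul_left, ENNReal.tsum_geometric]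
          congr 1
          rw [show (1 : ℝ≥0∞) - 2⁻¹ = 2⁻¹ by
            rw [ENNReal.sub_eq_of_eq_add (by norm_num)]
            rw [ENNReal.inv_two_add_inv_two]]
          simp
  -- conclude
  rw [EMetric.tendsto_atTop]
  intro ε hε
  have htend : Tendsto (fun N : ℕ => (2 : ℝ≥0∞)⁻¹ ^ N * 2) atTop (𝓝 0) := by
    have h0 : Tendsto (fun N : ℕ => (2 : ℝ≥0∞)⁻¹ ^ N) atTop (𝓝 0) :=
      ENNReal.tendsto_pow_atTop_nhds_zero_of_lt_one (by norm_num)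
    simpa using ENNReal.Tendsto.mul_const h0 (Or.inr (by norm_num))
  obtain ⟨ε', hε'pos, hε'lt⟩ : ∃ ε' : ℝ≥0∞, 0 < ε' ∧ ε' < ε := by
    rcases eq_or_ne ε ⊤ with rfl | hne
    · exact ⟨1, by norm_num, by norm_num⟩
    · exact ⟨ε / 2, ENNReal.half_pos hε.ne', ENNReal.half_lt_self hε.ne' hne⟩
  obtain ⟨N₀, hN₀⟩ := (ENNReal.tendsto_atTop_zero.mp htend) ε' hε'pos
  exact ⟨N₀, fun n hn => lt_of_le_of_lt (le_trans (hest n) (hN₀ n hn)) hε'lt⟩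

theorem nikodym (μ : Measure Ω) [IsFiniteMeasure μ]
    (F : ℕ → Set Ω → ℝ) (lam : Set Ω → ℝ) (c : ℕ → ℝ) (hc : ∀ i, 0 ≤ c i)
    (hFadd : ∀ i A B, MeasurableSet A → MeasurableSet B → Disjoint A B →
      F i (A ∪ B) = F i A + F i B)
    (hFpos : ∀ i A, MeasurableSet A → 0 ≤ F i A)
    (hFle : ∀ i A, MeasurableSet A → F i A ≤ c i * (μ A).toReal)
    (hconv : ∀ A, MeasurableSet A → Tendsto (fun i => F i A) atTop (𝓝 (lam A))) :
    ∀ B : ℕ → Set Ω, (∀ n, MeasurableSet (B n)) → Antitone B → (⋂ n, B n) = ∅ →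
      Tendsto (fun n => lam (B n)) atTop (𝓝 0) := by
  letI X := MSet Ω
  letI := msetPEMS μ
  haveI := msetComplete μ
  haveI : Nonempty (MSet Ω) := ⟨⟨∅, MeasurableSet.empty⟩⟩
  -- basic consequences of additivity
  have hFsub : ∀ i (s D : Set Ω), MeasurableSet s → MeasurableSet D →
      F i (s ∪ D) = F i (s \ D) + F i D := by
    intro i s D hs hD
    have h := hFadd i (s \ D) D (hs.diff hD) hD disjoint_sdiff_left
    rwa [Set.diff_union_self] at h
  have hFmono : ∀ i (A B' : Set Ω), MeasurableSet A → MeasurableSet B' → A ⊆ B' →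
      F i A ≤ F i B' := by
    intro i A B' hA hB' hAB
    have h := hFadd i A (B' \ A) hA (hB'.diff hA) disjoint_sdiff_right
    rw [Set.union_diff_cancel hAB] at h
    have := hFpos i (B' \ A) (hB'.diff hA)
    linarith
  have hlip : ∀ i (A B' : Set Ω), MeasurableSet A → MeasurableSet B' →
      |F i A - F i B'| ≤ c i * (μ (A ∆ B')).toReal := by
    intro i A B' hA hB'
    have hAB : MeasurableSet (A ∆ B') := hA.symmDiff hB'
    have h1 : F i A = F i (A ∩ B') + F i (A \ B') := by
      have := hFadd i (A ∩ B') (A \ B') (hA.inter hB') (hA.diff hB')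
        (Set.disjoint_of_subset_left Set.inter_subset_right disjoint_sdiff_right)
      rwa [Set.inter_union_diff] at this
    have h2 : F i B' = F i (A ∩ B') + F i (B' \ A) := by
      have := hFadd i (B' ∩ A) (B' \ A) (hB'.inter hA) (hB'.diff hA)
        (Set.disjoint_of_subset_left Set.inter_subset_right disjoint_sdiff_right)
      rwa [Set.inter_union_diff, Set.inter_comm B' A] at this
    have hle1 : F i (A \ B') ≤ c i * (μ (A ∆ B')).toReal := by
      refine le_trans (hFmono i _ _ (hA.diff hB') hAB Set.subset_union_left) ?_
      exact hFle i _ hAB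
    have hle2 : F i (B' \ A) ≤ c i * (μ (A ∆ B')).toReal := by
      refine le_trans (hFmono i _ _ (hB'.diff hA) hAB Set.subset_union_right) ?_
      exact hFle i _ hAB
    have hp1 := hFpos i (A \ B') (hA.diff hB')
    have hp2 := hFpos i (B' \ A) (hB'.diff hA)
    rw [abs_le]
    constructor <;> [linarith; linarith]
  -- continuity of the functionals on the measure algebra
  have hcont : ∀ i, Continuous (fun s : MSet Ω => F i s.carrier) := by
    intro i
    refine LipschitzWith.continuous (K := (c i).toNNReal) ?_
    intro s t
    rw [edist_mset, edist_dist, Real.dist_eq]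
    calc ENNReal.ofReal |F i s.carrier - F i t.carrier| ≤
        ENNReal.ofReal (c i * (μ (s.carrier ∆ t.carrier)).toReal) :=
          ENNReal.ofReal_le_ofReal (hlip i s.carrier t.carrier s.meas t.meas)
      _ = (c i).toNNReal * μ (s.carrier ∆ t.carrier) := by
          rw [ENNReal.ofReal_mul (hc i), ENNReal.ofReal_toReal (measure_ne_top μ _)]
          rfl
  intro B hBmeas hBanti hBempty
  have hlamnonneg : ∀ n, 0 ≤ lam (B n) := fun n =>
    ge_of_tendsto' (hconv (B n) (hBmeas n)) (fun i => hFpos i (B n) (hBmeas n))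
  rw [Metric.tendsto_atTop]
  intro ε hε
  set ε1 := ε / 4 with hε1
  have hε1pos : 0 < ε1 := by positivity
  -- Baire category argument
  set E : ℕ → Set (MSet Ω) := fun m =>
    ⋂ (i) (j), {s | m ≤ i → m ≤ j → |F i s.carrier - F j s.carrier| ≤ ε1} with hE
  have hEclosed : ∀ m, IsClosed (E m) := by
    intro m
    refine isClosed_iInter fun i => isClosed_iInter fun j => ?_
    by_cases hi : m ≤ i
    · by_cases hj : m ≤ j
      · have : {s : MSet Ω |
            m ≤ i → m ≤ j → |F i s.carrier - F j s.carrier| ≤ ε1} =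
            {s | |F i s.carrier - F j s.carrier| ≤ ε1} := by
          ext s; simp [hi, hj]
        rw [this]
        exact isClosed_le (((hcont i).sub (hcont j)).abs) continuous_const
      · have : {s : MSet Ω |
            m ≤ i → m ≤ j → |F i s.carrier - F j s.carrier| ≤ ε1} = Set.univ := by
          ext s; simp [hj]
        rw [this]; exact isClosed_univ
    · have : {s : MSet Ω |
          m ≤ i → m ≤ j → |F i s.carrier - F j s.carrier| ≤ ε1} = Set.univ := by
        ext s; simp [hi]
      rw [this]; exact isClosed_univ
  have hEcover : (⋃ m, E m) = Set.univ := by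
    rw [Set.eq_univ_iff_forall]
    intro s
    have hcauchy : CauchySeq (fun i => F i s.carrier) := (hconv s.carrier s.meas).cauchySeq
    obtain ⟨N, hN⟩ := Metric.cauchySeq_iff.mp hcauchy ε1 hε1pos
    refine Set.mem_iUnion.mpr ⟨N, ?_⟩
    refine Set.mem_iInter.mpr fun i => Set.mem_iInter.mpr fun j => ?_
    intro hi hj
    exact le_of_lt (by rw [← Real.dist_eq]; exact hN i hi j hj)
  obtain ⟨m, hm⟩ := nonempty_interior_of_iUnion_of_closed hEclosed hEcover
  obtain ⟨s₀, hs₀⟩ := hm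
  obtain ⟨r, hrpos, hr⟩ := EMetric.mem_nhds_iff.mp (mem_interior_iff_mem_nhds.mp hs₀)
  -- uniform Cauchy estimate on small sets
  have hkey : ∀ D : Set Ω, MeasurableSet D → μ D < r →
      ∀ i j, m ≤ i → m ≤ j → |F i D - F j D| ≤ 2 * ε1 := by
    intro D hD hDr i j hi hj
    set s1 : MSet Ω := ⟨s₀.carrier ∪ D, s₀.meas.union hD⟩
    set s2 : MSet Ω := ⟨s₀.carrier \ D, s₀.meas.diff hD⟩
    have hd1 : (s₀.carrier ∪ D) ∆ s₀.carrier = D \ s₀.carrier := by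
      ext y; rw [Set.mem_symmDiff]; simp; tauto
    have hd2 : (s₀.carrier \ D) ∆ s₀.carrier = s₀.carrier ∩ D := by
      ext y; rw [Set.mem_symmDiff]; simp; tauto
    have hs1 : s1 ∈ E m := by
      apply hr
      rw [EMetric.mem_ball, edist_mset]
      simp only [s1, hd1]
      exact lt_of_le_of_lt (measure_mono Set.diff_subset) hDr
    have hs2 : s2 ∈ E m := by
      apply hr
      rw [EMetric.mem_ball, edist_mset]
      simp only [s2, hd2]
      exact lt_of_le_of_lt (measure_mono Set.inter_subset_right) hDr
    have h1 : |F i s1.carrier - F j s1.carrier| ≤ ε1 := by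
      have := Set.mem_iInter.mp (Set.mem_iInter.mp hs1 i) j; exact this hi hj
    have h2 : |F i s2.carrier - F j s2.carrier| ≤ ε1 := by
      have := Set.mem_iInter.mp (Set.mem_iInter.mp hs2 i) j; exact this hi hj
    have hi' : F i s1.carrier = F i s2.carrier + F i D := hFsub i s₀.carrier D s₀.meas hD
    have hj' : F j s1.carrier = F j s2.carrier + F j D := hFsub j s₀.carrier D s₀.meas hD
    rw [abs_le] at h1 h2 ⊢
    constructor <;> [linarith; linarith]
  -- pass to the limit
  have hlim : ∀ D : Set Ω, MeasurableSet D → μ D < r → |lam D - F m D| ≤ 2 * ε1 := by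
    intro D hD hDr
    have htendD : Tendsto (fun j => |F j D - F m D|) atTop (𝓝 |lam D - F m D|) :=
      (((hconv D hD).sub_const (F m D)).abs)
    refine le_of_tendsto htendD ?_
    filter_upwards [eventually_ge_atTop m] with j hj
    exact hkey D hD hDr j m hj le_rfl
  -- measures of B n tend to zero
  have hμB : Tendsto (fun n => μ (B n)) atTop (𝓝 0) := by
    have := tendsto_measure_iInter_atTop (μ := μ)
      (fun n => (hBmeas n).nullMeasurableSet) hBanti ⟨0, measure_ne_top μ _⟩
    rw [hBempty, measure_empty] at this
    exact this
  have hμBreal : Tendsto (fun n => (μ (B n)).toReal) atTop (𝓝 0) := by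
    have h0 : (0 : ℝ≥0∞) ≠ ⊤ := by norm_num
    have := (ENNReal.tendsto_toReal h0).comp hμB
    simpa [Function.comp_def] using this
  have hev1 : ∀ᶠ n in atTop, μ (B n) < r := hμB.eventually_lt_const hrpos
  have hev2 : ∀ᶠ n in atTop, c m * (μ (B n)).toReal < ε1 := by
    have : Tendsto (fun n => c m * (μ (B n)).toReal) atTop (𝓝 (c m * 0)) :=
      hμBreal.const_mul (c m)
    rw [mul_zero] at this
    exact this.eventually_lt_const hε1pos
  rw [eventually_atTop] at hev1 hev2
  obtain ⟨N1, hN1⟩ := hev1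
  obtain ⟨N2, hN2⟩ := hev2
  refine ⟨max N1 N2, fun n hn => ?_⟩
  have hbn1 := hN1 n (le_trans (le_max_left _ _) hn)
  have hbn2 := hN2 n (le_trans (le_max_right _ _) hn)
  have hFm : F m (B n) ≤ c m * (μ (B n)).toReal := hFle m (B n) (hBmeas n)
  have h := hlim (B n) (hBmeas n) hbn1
  rw [Real.dist_eq, sub_zero, abs_of_nonneg (hlamnonneg n)]
  rw [abs_le] at h
  have hFmpos := hFpos m (B n) (hBmeas n)
  have : lam (B n) ≤ 2 * ε1 + F m (B n) := by linarith
  have : lam (B n) ≤ 3 * ε1 := by linarith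
  linarith [hε1pos]

end StrongFellerAux

/-- `Bb f`: `f` is a bounded Borel measurable real-valued function. -/
def Bb {Ω : Type*} [MeasurableSpace Ω] (f : Ω → ℝ) : Prop :=
  Measurable f ∧ ∃ C : ℝ, ∀ x, |f x| ≤ C

lemma Bb.integrable {Ω : Type*} [MeasurableSpace Ω] {f : Ω → ℝ} (hf : Bb f)
    (ν : MeasureTheory.Measure Ω) [IsFiniteMeasure ν] : Integrable f ν := by
  obtain ⟨hm, C, hC⟩ := hf
  refine Integrable.mono' (integrable_const C) hm.aestronglyMeasurable ?_
  exact Filter.Eventually.of_forall fun y => by simpa [Real.norm_eq_abs] using hC y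

theorem stmt_5 {Ω : Type*} [TopologicalSpace Ω] [T2Space Ω] [SecondCountableTopology Ω]
    [MeasurableSpace Ω] [BorelSpace Ω]
    (μ : Measure Ω) [IsFiniteMeasure μ]
    (hμpos : ∀ U : Set Ω, IsOpen U → U.Nonempty → 0 < μ U)
    (T : (Ω → ℝ) → (Ω → ℝ))
    (hTBb : ∀ f, Bb f → Bb (T f))
    (hadd : ∀ f g, Bb f → Bb g → T (f + g) = T f + T g)
    (hsmul : ∀ (c : ℝ) (f), Bb f → T (c • f) = c • T f)
    (hpos : ∀ f, Bb f → (∀ x, 0 ≤ f x) → ∀ x, 0 ≤ T f x)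
    (hSF : ∀ f, Bb f → Continuous (T f))
    (hker : ∃ k : Ω → Ω → ℝ, Measurable (Function.uncurry k) ∧
      ∀ f, Bb f → (∀ x, Integrable (fun y => k x y * f y) μ) ∧
        ∀ᵐ x ∂μ, T f x = ∫ y, k x y * f y ∂μ)
    (hinv : ∀ f, Bb f → ∫ x, T f x ∂μ = ∫ x, f x ∂μ) :
    ∀ x : Ω, ∃ μx : Measure Ω, IsFiniteMeasure μx ∧
      ∀ f, Bb f → T (T f) x = ∫ y, f y ∂μx := by
  clear hker
  intro x
  -- basic Bb facts
  have Bb0 : Bb (fun _ : Ω => (0 : ℝ)) := ⟨measurable_const, 0, by norm_num⟩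
  have Bb1 : Bb (fun _ : Ω => (1 : ℝ)) := ⟨measurable_const, 1, by norm_num⟩
  have BbAdd : ∀ {f g : Ω → ℝ}, Bb f → Bb g → Bb (f + g) := by
    rintro f g ⟨hf, C, hC⟩ ⟨hg, D, hD⟩
    exact ⟨hf.add hg, C + D, fun y => by
      calc |f y + g y| ≤ |f y| + |g y| := abs_add_le _ _
        _ ≤ C + D := add_le_add (hC y) (hD y)⟩
  have BbSmul : ∀ (c : ℝ) {f : Ω → ℝ}, Bb f → Bb (c • f) := by
    rintro c f ⟨hf, C, hC⟩
    exact ⟨hf.const_smul c, |c| * C, fun y => by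
      simp only [Pi.smul_apply, smul_eq_mul, abs_mul]
      exact mul_le_mul_of_nonneg_left (hC y) (abs_nonneg c)⟩
  have BbSub : ∀ {f g : Ω → ℝ}, Bb f → Bb g → Bb (f - g) := by
    intro f g hf hg
    have : f - g = f + (-1 : ℝ) • g := by funext y; simp; ring
    rw [this]; exact BbAdd hf (BbSmul (-1) hg)
  -- T is subtractive and monotone
  have hTsub : ∀ f g : Ω → ℝ, Bb f → Bb g → T (f - g) = T f - T g := by
    intro f g hf hg
    have h1 : f - g = f + (-1 : ℝ) • g := by funext y; simp; ring
    rw [h1, hadd f ((-1 : ℝ) • g) hf (BbSmul (-1) hg), hsmul (-1) g hg]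
    funext y; simp; ring
  have hTmono : ∀ f g : Ω → ℝ, Bb f → Bb g → (∀ y, f y ≤ g y) → ∀ y, T f y ≤ T g y := by
    intro f g hf hg hfg y
    have h1 : ∀ z, 0 ≤ (g - f) z := fun z => by simpa using hfg z
    have h2 := hpos (g - f) (BbSub hg hf) h1 y
    rw [hTsub g f hg hf] at h2
    simpa using h2
  have hT0 : T (fun _ : Ω => (0 : ℝ)) = fun _ => (0 : ℝ) := by
    have h := hsmul 0 (fun _ : Ω => (0 : ℝ)) Bb0
    have h1 : (0 : ℝ) • (fun _ : Ω => (0 : ℝ)) = fun _ : Ω => (0 : ℝ) := by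
      funext y; simp
    rw [h1] at h
    rw [h]; funext y; simp
  -- the indicator machinery
  set I : Set Ω → Ω → ℝ := fun A => A.indicator (fun _ => (1 : ℝ)) with hI
  have hBbI : ∀ {A : Set Ω}, MeasurableSet A → Bb (I A) := by
    intro A hA
    refine ⟨measurable_const.indicator hA, 1, fun y => ?_⟩
    by_cases h : y ∈ A <;> simp [hI, Set.indicator, h]
  have hInonneg : ∀ (A : Set Ω) (y : Ω), 0 ≤ I A y := by
    intro A y; by_cases h : y ∈ A <;> simp [hI, Set.indicator, h]
  set g : Set Ω → Ω → ℝ := fun A => T (T (I A)) with hg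
  set lam : Set Ω → ℝ := fun A => g A x with hlam
  have hgC : ∀ {A : Set Ω}, MeasurableSet A → Continuous (g A) := by
    intro A hA; exact hSF _ (hTBb _ (hBbI hA))
  have hgBb : ∀ {A : Set Ω}, MeasurableSet A → Bb (g A) := by
    intro A hA; exact hTBb _ (hTBb _ (hBbI hA))
  have hgnonneg : ∀ {A : Set Ω}, MeasurableSet A → ∀ y, 0 ≤ g A y := by
    intro A hA
    exact hpos _ (hTBb _ (hBbI hA)) (hpos _ (hBbI hA) (hInonneg A))
  have hgint : ∀ {A : Set Ω}, MeasurableSet A → ∫ y, g A y ∂μ = (μ A).toReal := by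
    intro A hA
    rw [hg]
    rw [hinv _ (hTBb _ (hBbI hA)), hinv _ (hBbI hA)]
    exact integral_indicator_one hA
  have hgadd : ∀ {A B : Set Ω}, MeasurableSet A → MeasurableSet B → Disjoint A B →
      g (A ∪ B) = fun y => g A y + g B y := by
    intro A B hA hB hAB
    have h1 : I (A ∪ B) = I A + I B := by
      rw [hI]; exact Set.indicator_union_of_disjoint hAB _
    have h2 : T (I (A ∪ B)) = T (I A) + T (I B) := by
      rw [h1]; exact hadd _ _ (hBbI hA) (hBbI hB)
    have h3 : T (T (I (A ∪ B))) = T (T (I A)) + T (T (I B)) := by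
      rw [h2]; exact hadd _ _ (hTBb _ (hBbI hA)) (hTBb _ (hBbI hB))
    funext y
    show T (T (I (A ∪ B))) y = T (T (I A)) y + T (T (I B)) y
    rw [h3]; rfl
  -- neighborhood basis at x
  obtain ⟨s, hs⟩ := Filter.exists_antitone_basis (𝓝 x)
  set O : ℕ → Set Ω := fun i => interior (s i) with hO
  have hOopen : ∀ i, IsOpen (O i) := fun i => isOpen_interior
  have hOx : ∀ i, x ∈ O i := fun i =>
    mem_interior_iff_mem_nhds.mpr (hs.toHasBasis.mem_of_mem trivial)
  have hOmeas : ∀ i, MeasurableSet (O i) := fun i => (hOopen i).measurableSet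
  have hOpos : ∀ i, 0 < (μ (O i)).toReal := fun i =>
    ENNReal.toReal_pos (hμpos _ (hOopen i) ⟨x, hOx i⟩).ne' (measure_ne_top μ _)
  set c : ℕ → ℝ := fun i => ((μ (O i)).toReal)⁻¹ with hc
  have hcpos : ∀ i, 0 < c i := fun i => inv_pos.mpr (hOpos i)
  have hcmul : ∀ i, c i * (μ (O i)).toReal = 1 := fun i => inv_mul_cancel₀ (hOpos i).ne'
  set F : ℕ → Set Ω → ℝ := fun i A => c i * ∫ y in O i, g A y ∂μ with hF
  have hFadd : ∀ i (A B : Set Ω), MeasurableSet A → MeasurableSet B → Disjoint A B →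
      F i (A ∪ B) = F i A + F i B := by
    intro i A B hA hB hAB
    rw [hF]
    simp only []
    rw [hgadd hA hB hAB]
    rw [integral_add (((hgBb hA).integrable μ).integrableOn)
      (((hgBb hB).integrable μ).integrableOn)]
    ring
  have hFpos : ∀ i (A : Set Ω), MeasurableSet A → 0 ≤ F i A := by
    intro i A hA
    exact mul_nonneg (hcpos i).le
      (setIntegral_nonneg (hOmeas i) (fun y _ => hgnonneg hA y))
  have hFle : ∀ i (A : Set Ω), MeasurableSet A → F i A ≤ c i * (μ A).toReal := by
    intro i A hA
    rw [hF]
    simp only []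
    rw [← hgint hA]
    refine mul_le_mul_of_nonneg_left ?_ (hcpos i).le
    exact setIntegral_le_integral ((hgBb hA).integrable μ)
      (Filter.Eventually.of_forall (hgnonneg hA))
  have hFconv : ∀ A : Set Ω, MeasurableSet A →
      Tendsto (fun i => F i A) atTop (𝓝 (lam A)) := by
    intro A hA
    rw [Metric.tendsto_atTop]
    intro ε hε
    have hV : (g A) ⁻¹' (Metric.ball (g A x) (ε / 2)) ∈ 𝓝 x := by
      refine (hgC hA).continuousAt.preimage_mem_nhds ?_
      exact Metric.ball_mem_nhds _ (by positivity)
    obtain ⟨i₀, -, hi₀⟩ := hs.toHasBasis.mem_iff.mp hV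
    refine ⟨i₀, fun i hi => ?_⟩
    have hOV : O i ⊆ (g A) ⁻¹' (Metric.ball (g A x) (ε / 2)) :=
      le_trans interior_subset (le_trans (hs.antitone hi) hi₀)
    have hbound : ∀ y ∈ O i, ‖g A y - g A x‖ ≤ ε / 2 := by
      intro y hy
      have := hOV hy
      simp only [Set.mem_preimage, Metric.mem_ball, Real.dist_eq] at this
      rw [Real.norm_eq_abs]
      exact this.le
    have hxconst : lam A = c i * ∫ y in O i, (fun _ => g A x) y ∂μ := by
      rw [setIntegral_const, smul_eq_mul, hlam, ← mul_assoc, (show c i * μ.real (O i) = 1 from hcmul i), one_mul]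
    have hsplit : F i A - lam A = c i * ∫ y in O i, (g A y - g A x) ∂μ := by
      rw [hxconst, hF]
      simp only []
      rw [integral_sub (((hgBb hA).integrable μ).integrableOn)
        (integrableOn_const (measure_lt_top μ _).ne)]
      ring
    have hnorm : |∫ y in O i, (g A y - g A x) ∂μ| ≤ ε / 2 * (μ (O i)).toReal := by
      have := norm_setIntegral_le_of_norm_le_const (μ := μ) (s := O i)
        (measure_lt_top μ _) hbound
      simpa [Real.norm_eq_abs, measureReal_def] using this
    rw [Real.dist_eq, hsplit, abs_mul, abs_of_nonneg (hcpos i).le]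
    calc c i * |∫ y in O i, (g A y - g A x) ∂μ| ≤ c i * (ε / 2 * (μ (O i)).toReal) :=
          mul_le_mul_of_nonneg_left hnorm (hcpos i).le
      _ = ε / 2 := by rw [mul_comm (ε / 2) _, ← mul_assoc, hcmul i, one_mul]
      _ < ε := by linarith
  -- the limit set function is countably additive on decreasing null sequences
  have hσB := StrongFellerAux.nikodym μ F lam c (fun i => (hcpos i).le)
    hFadd hFpos hFle hFconv
  have hlam0 : lam ∅ = 0 := by
    have h1 : I ∅ = fun _ => (0 : ℝ) := by funext y; simp [hI]
    rw [hlam]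
    show g ∅ x = 0
    rw [hg]
    simp only []
    rw [h1, hT0, hT0]
  have hlamnonneg : ∀ {A : Set Ω}, MeasurableSet A → 0 ≤ lam A := fun hA => hgnonneg hA x
  have hlamadd : ∀ {A B : Set Ω}, MeasurableSet A → MeasurableSet B → Disjoint A B →
      lam (A ∪ B) = lam A + lam B := by
    intro A B hA hB hAB
    rw [hlam]
    show g (A ∪ B) x = g A x + g B x
    rw [hgadd hA hB hAB]
  -- countable additivity
  have hσ : ∀ f : ℕ → Set Ω, (∀ i, MeasurableSet (f i)) → Pairwise (Function.onFun Disjoint f) →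
      ENNReal.ofReal (lam (⋃ i, f i)) = ∑' i, ENNReal.ofReal (lam (f i)) := by
    intro f hfm hfd
    set B : ℕ → Set Ω := fun n => ⋃ i, f (n + i) with hB
    have hBmeas : ∀ n, MeasurableSet (B n) := fun n => MeasurableSet.iUnion fun i => hfm _
    have hBanti : Antitone B := by
      intro n m hnm
      intro y hy
      obtain ⟨i, hi⟩ := Set.mem_iUnion.mp hy
      exact Set.mem_iUnion.mpr ⟨m - n + i, by rw [show n + (m - n + i) = m + i by omega]; exact hi⟩
    have hBempty : (⋂ n, B n) = ∅ := by
      by_contra h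
      obtain ⟨y, hy⟩ := Set.nonempty_iff_ne_empty.mpr h
      have h0 := Set.mem_iInter.mp hy 0
      obtain ⟨i0, hi0⟩ := Set.mem_iUnion.mp h0
      have h1 := Set.mem_iInter.mp hy (0 + i0 + 1)
      obtain ⟨i1, hi1⟩ := Set.mem_iUnion.mp h1
      have hne : 0 + i0 ≠ 0 + i0 + 1 + i1 := by omega
      exact Set.disjoint_left.mp (hfd hne) hi0 hi1
    -- finite sums
    have hlamsum : ∀ n, lam (⋃ i ∈ Finset.range n, f i) = ∑ i ∈ Finset.range n, lam (f i) := by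
      intro n
      induction n with
      | zero => simpa using hlam0
      | succ n ih =>
        rw [Finset.range_add_one, Finset.set_biUnion_insert, Finset.sum_insert
          (by simp), ← ih]
        rw [Set.union_comm]
        rw [hlamadd ((Finset.range n).measurableSet_biUnion fun i _ => hfm i)
          (hfm n) ?_]
        · ring
        · rw [Set.disjoint_left]
          rintro y hy hyn
          obtain ⟨i, hi, hyi⟩ := Set.mem_iUnion₂.mp hy
          simp only [Finset.mem_coe, Finset.mem_range] at hi
          exact Set.disjoint_left.mp (hfd (show i ≠ n by omega)) hyi hyn
    have hpartial : ∀ n, lam (⋃ i, f i) = (∑ i ∈ Finset.range n, lam (f i)) + lam (B n) := by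
      intro n
      have hsplit : (⋃ i, f i) = (⋃ i ∈ Finset.range n, f i) ∪ B n := by
        ext y
        simp only [Set.mem_iUnion, Set.mem_union, Finset.mem_range, hB]
        constructor
        · rintro ⟨i, hi⟩
          rcases lt_or_ge i n with h | h
          · exact Or.inl ⟨i, h, hi⟩
          · exact Or.inr ⟨i - n, by rw [show n + (i - n) = i by omega]; exact hi⟩
        · rintro (⟨i, _, hi⟩ | ⟨i, hi⟩)
          · exact ⟨i, hi⟩
          · exact ⟨n + i, hi⟩
      have hdisj : Disjoint (⋃ i ∈ Finset.range n, f i) (B n) := by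
        rw [Set.disjoint_left]
        rintro y hy hyB
        obtain ⟨i, hi, hyi⟩ := Set.mem_iUnion₂.mp hy
        simp only [Finset.mem_coe, Finset.mem_range] at hi
        obtain ⟨j, hj⟩ := Set.mem_iUnion.mp hyB
        exact Set.disjoint_left.mp (hfd (show i ≠ n + j by omega)) hyi hj
      rw [hsplit, hlamadd ((Finset.range n).measurableSet_biUnion
        fun i _ => hfm i) (hBmeas n) hdisj, hlamsum n]
    have hBlim : Tendsto (fun n => lam (B n)) atTop (𝓝 0) := hσB B hBmeas hBanti hBempty
    have hsumtend : Tendsto (fun n => ∑ i ∈ Finset.range n, lam (f i)) atTop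
        (𝓝 (lam (⋃ i, f i))) := by
      have h1 : (fun n => ∑ i ∈ Finset.range n, lam (f i)) =
          fun n => lam (⋃ i, f i) - lam (B n) := by
        funext n; have := hpartial n; linarith
      rw [h1]
      simpa using tendsto_const_nhds.sub hBlim
    have hsummable : Summable (fun i => lam (f i)) := by
      refine summable_of_sum_range_le (c := lam (⋃ i, f i)) (fun i => hlamnonneg (hfm i)) ?_
      intro n
      have := hpartial n
      have h2 := hlamnonneg (hBmeas n)
      linarith
    have htsum : ∑' i, lam (f i) = lam (⋃ i, f i) :=
      tendsto_nhds_unique hsummable.hasSum.tendsto_sum_nat hsumtend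
    rw [← htsum, ENNReal.ofReal_tsum_of_nonneg (fun i => hlamnonneg (hfm i)) hsummable]
  -- define the measure
  set μx : Measure Ω := Measure.ofMeasurable (fun A _ => ENNReal.ofReal (lam A))
    (by simp [hlam0]) hσ with hμx
  have hμxA : ∀ {A : Set Ω}, MeasurableSet A → μx A = ENNReal.ofReal (lam A) := by
    intro A hA
    rw [hμx]
    exact Measure.ofMeasurable_apply A hA
  haveI hμxfin : IsFiniteMeasure μx :=
    ⟨by rw [hμxA MeasurableSet.univ]; exact ENNReal.ofReal_lt_top⟩
  refine ⟨μx, hμxfin, ?_⟩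
  intro f hf
  classical
  obtain ⟨hfm, C, hC⟩ := hf
  have hfBb : Bb f := ⟨hfm, C, hC⟩
  have hC' : ∀ y, |f y| ≤ max C 0 := fun y => le_trans (hC y) (le_max_left _ _)
  -- single scaled indicators
  have hBbsingle : ∀ (a : ℝ) (A' : Set Ω), MeasurableSet A' → Bb (fun y => a * I A' y) := by
    intro a A' hA'
    have e : (fun y => a * I A' y) = a • I A' := by funext y; simp
    rw [e]; exact BbSmul a (hBbI hA')
  have hP1 : ∀ (a : ℝ) (A' : Set Ω), MeasurableSet A' →
      T (T (fun y => a * I A' y)) x = ∫ y, a * I A' y ∂μx := by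
    intro a A' hA'
    have e1 : (fun y => a * I A' y) = a • I A' := by funext y; simp
    have e2 : T (a • I A') = a • T (I A') := hsmul a _ (hBbI hA')
    have e3 : T (a • T (I A')) = a • T (T (I A')) := hsmul a _ (hTBb _ (hBbI hA'))
    have eint : ∫ y, I A' y ∂μx = lam A' := by
      have h1 : ∫ y, I A' y ∂μx = (μx A').toReal := integral_indicator_one hA'
      rw [h1, hμxA hA', ENNReal.toReal_ofReal (hlamnonneg hA')]
    have eR : ∫ y, a * I A' y ∂μx = a * lam A' := by rw [integral_const_mul, eint]
    rw [eR, e1, e2, e3]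
    show a * T (T (I A')) x = a * lam A'
    rfl
  -- finite sums of scaled indicators
  have hBbSum : ∀ (J : Finset ℤ) (a : ℤ → ℝ) (A' : ℤ → Set Ω), (∀ j, MeasurableSet (A' j)) →
      Bb (fun y => ∑ j ∈ J, a j * I (A' j) y) := by
    intro J a A' hA'
    refine Finset.induction_on J ?_ ?_
    · have e : (fun y : Ω => ∑ j ∈ (∅ : Finset ℤ), a j * I (A' j) y) = fun _ => (0:ℝ) := by
        funext y; simp
      rw [e]; exact Bb0
    · intro j s hjs ih
      have e : (fun y : Ω => ∑ k ∈ insert j s, a k * I (A' k) y) =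
          (fun y => a j * I (A' j) y) + fun y => ∑ k ∈ s, a k * I (A' k) y := by
        funext y; simp [Finset.sum_insert hjs]
      rw [e]; exact BbAdd (hBbsingle (a j) (A' j) (hA' j)) ih
  have hPsum : ∀ (J : Finset ℤ) (a : ℤ → ℝ) (A' : ℤ → Set Ω), (∀ j, MeasurableSet (A' j)) →
      T (T (fun y => ∑ j ∈ J, a j * I (A' j) y)) x = ∫ y, ∑ j ∈ J, a j * I (A' j) y ∂μx := by
    intro J a A' hA'
    refine Finset.induction_on J ?_ ?_
    · have e : (fun y : Ω => ∑ j ∈ (∅ : Finset ℤ), a j * I (A' j) y) = fun _ => (0:ℝ) := by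
        funext y; simp
      rw [e, hT0, hT0]
      simp
    · intro j s hjs ih
      have hb1 : Bb (fun y => a j * I (A' j) y) := hBbsingle (a j) (A' j) (hA' j)
      have hb2 : Bb (fun y => ∑ k ∈ s, a k * I (A' k) y) := hBbSum s a A' hA'
      have e : (fun y : Ω => ∑ k ∈ insert j s, a k * I (A' k) y) =
          (fun y => a j * I (A' j) y) + fun y => ∑ k ∈ s, a k * I (A' k) y := by
        funext y; simp [Finset.sum_insert hjs]
      rw [e, hadd _ _ hb1 hb2, hadd _ _ (hTBb _ hb1) (hTBb _ hb2)]
      show T (T fun y => a j * I (A' j) y) x + T (T fun y => ∑ k ∈ s, a k * I (A' k) y) x = _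
      rw [hP1 (a j) (A' j) (hA' j), ih]
      exact (integral_add (hb1.integrable μx) (hb2.integrable μx)).symm
  -- uniform bound for T ∘ T
  have hT1nonneg : ∀ y, 0 ≤ T (fun _ : Ω => (1:ℝ)) y :=
    hpos _ Bb1 fun _ => zero_le_one
  have hTT1nonneg : 0 ≤ T (T (fun _ : Ω => (1:ℝ))) x :=
    hpos _ (hTBb _ Bb1) hT1nonneg x
  have hTT_bound : ∀ (u : Ω → ℝ) (b : ℝ), Bb u → (∀ y, |u y| ≤ b) →
      |T (T u) x| ≤ b * T (T (fun _ : Ω => (1:ℝ))) x := by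
    intro u b hu hb
    have ht1 : Bb (T (fun _ : Ω => (1:ℝ))) := hTBb _ Bb1
    have h1 : ∀ y, T u y ≤ T (b • fun _ : Ω => (1:ℝ)) y := by
      refine hTmono u _ hu (BbSmul b Bb1) fun y => ?_
      have := (abs_le.mp (hb y)).2
      simpa using this
    have h2 : ∀ y, T ((-b) • fun _ : Ω => (1:ℝ)) y ≤ T u y := by
      refine hTmono _ u (BbSmul (-b) Bb1) hu fun y => ?_
      have := (abs_le.mp (hb y)).1
      simpa using this
    have e1 : T (b • fun _ : Ω => (1:ℝ)) = b • T (fun _ : Ω => (1:ℝ)) := hsmul b _ Bb1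
    have e2 : T ((-b) • fun _ : Ω => (1:ℝ)) = (-b) • T (fun _ : Ω => (1:ℝ)) := hsmul (-b) _ Bb1
    have h3 : T (T u) x ≤ T (b • T (fun _ : Ω => (1:ℝ))) x := by
      refine hTmono _ _ (hTBb _ hu) (BbSmul b ht1) (fun y => ?_) x
      have := h1 y; rw [e1] at this; exact this
    have h4 : T ((-b) • T (fun _ : Ω => (1:ℝ))) x ≤ T (T u) x := by
      refine hTmono _ _ (BbSmul (-b) ht1) (hTBb _ hu) (fun y => ?_) x
      have := h2 y; rw [e2] at this; exact this
    have e3 : T (b • T (fun _ : Ω => (1:ℝ))) = b • T (T (fun _ : Ω => (1:ℝ))) := hsmul b _ ht1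
    have e4 : T ((-b) • T (fun _ : Ω => (1:ℝ))) = (-b) • T (T (fun _ : Ω => (1:ℝ))) :=
      hsmul (-b) _ ht1
    rw [e3] at h3; rw [e4] at h4
    simp only [Pi.smul_apply, smul_eq_mul] at h3 h4
    rw [abs_le]
    constructor
    · calc -(b * T (T (fun _ : Ω => (1:ℝ))) x) = (-b) * T (T (fun _ : Ω => (1:ℝ))) x := by ring
        _ ≤ T (T u) x := h4
    · exact h3
  -- main estimate via floor approximation
  have hmain : ∀ n : ℕ, |T (T f) x - ∫ y, f y ∂μx| ≤
      (1/((n:ℝ)+1)) * (T (T (fun _ : Ω => (1:ℝ))) x + (μx Set.univ).toReal) := by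
    intro n
    set m1 : ℝ := (n:ℝ) + 1 with hm1def
    have hm1 : (0:ℝ) < m1 := by positivity
    set sn : Ω → ℝ := fun y => (⌊f y * m1⌋ : ℝ) / m1 with hsn
    set Nb : ℤ := ⌈(max C 0) * m1⌉ + 1 with hNb
    set A : ℤ → Set Ω := fun j => {y | ⌊f y * m1⌋ = j} with hA
    have hAmeas : ∀ j, MeasurableSet (A j) := by
      intro j
      have hmeas : Measurable fun y => ⌊f y * m1⌋ := (hfm.mul_const m1).floor
      exact hmeas (measurableSet_singleton j)
    have hmem : ∀ y, ⌊f y * m1⌋ ∈ Finset.Icc (-Nb) Nb := by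
      intro y
      rw [Finset.mem_Icc]
      have h1 : |f y * m1| ≤ (max C 0) * m1 := by
        rw [abs_mul, abs_of_pos hm1]
        exact mul_le_mul_of_nonneg_right (hC' y) hm1.le
      rw [abs_le] at h1
      have hceil : ((max C 0) * m1 : ℝ) ≤ (⌈(max C 0) * m1⌉ : ℝ) := Int.le_ceil _
      constructor
      · rw [Int.le_floor, hNb]
        push_cast
        linarith [h1.1, hceil]
      · have h2 : (⌊f y * m1⌋ : ℝ) ≤ (Nb : ℝ) := by
          have h3 := Int.floor_le (f y * m1)
          rw [hNb]
          push_cast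
          linarith [h1.2, hceil]
        exact_mod_cast h2
    have hsneq : sn = fun y => ∑ j ∈ Finset.Icc (-Nb) Nb, ((j:ℝ)/m1) * I (A j) y := by
      funext y
      rw [Finset.sum_eq_single (⌊f y * m1⌋)]
      · have hmemA : y ∈ A ⌊f y * m1⌋ := rfl
        have : I (A ⌊f y * m1⌋) y = 1 := Set.indicator_of_mem hmemA _
        rw [this, mul_one]
      · intro j _ hne
        have hnotmem : y ∉ A j := fun h => hne (h ▸ rfl)
        have : I (A j) y = 0 := Set.indicator_of_notMem hnotmem _
        rw [this, mul_zero]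
      · intro h
        exact absurd (hmem y) h
    have herr : ∀ y, |f y - sn y| ≤ 1 / m1 := by
      intro y
      have hfl := Int.floor_le (f y * m1)
      have hlt := Int.lt_floor_add_one (f y * m1)
      show |f y - (⌊f y * m1⌋ : ℝ) / m1| ≤ 1 / m1
      have h1 : f y - (⌊f y * m1⌋ : ℝ) / m1 = (f y * m1 - (⌊f y * m1⌋ : ℝ)) / m1 := by
        field_simp
      rw [h1, abs_div, abs_of_pos hm1,
        abs_of_nonneg (by linarith : (0:ℝ) ≤ f y * m1 - (⌊f y * m1⌋ : ℝ))]
      gcongr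
      linarith
    have hBbsn : Bb sn := by rw [hsneq]; exact hBbSum _ _ _ hAmeas
    have hPsn : T (T sn) x = ∫ y, sn y ∂μx := by rw [hsneq]; exact hPsum _ _ _ hAmeas
    have hdiff : T (T (f - sn)) x = T (T f) x - T (T sn) x := by
      rw [hTsub f sn hfBb hBbsn, hTsub (T f) (T sn) (hTBb _ hfBb) (hTBb _ hBbsn)]
      rfl
    have hb1 : |T (T (f - sn)) x| ≤ (1/m1) * T (T (fun _ : Ω => (1:ℝ))) x := by
      refine hTT_bound (f - sn) (1/m1) (BbSub hfBb hBbsn) fun y => ?_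
      simpa using herr y
    have hintsub : ∫ y, (f y - sn y) ∂μx = (∫ y, f y ∂μx) - ∫ y, sn y ∂μx :=
      integral_sub (hfBb.integrable μx) (hBbsn.integrable μx)
    have hb2 : |∫ y, (f y - sn y) ∂μx| ≤ (1/m1) * (μx Set.univ).toReal := by
      have := norm_integral_le_of_norm_le_const (μ := μx)
        (C := 1/m1) (f := fun y => f y - sn y)
        (Filter.Eventually.of_forall fun y => by
          rw [Real.norm_eq_abs]; exact herr y)
      simpa [Real.norm_eq_abs, measureReal_def] using this
    have heq : T (T f) x - ∫ y, f y ∂μx = T (T (f - sn)) x - ∫ y, (f y - sn y) ∂μx := by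
      rw [hdiff, hintsub, hPsn]; ring
    rw [heq]
    calc |T (T (f - sn)) x - ∫ y, (f y - sn y) ∂μx|
        ≤ |T (T (f - sn)) x| + |∫ y, (f y - sn y) ∂μx| := by
          rw [sub_eq_add_neg]
          exact (abs_add_le _ _).trans_eq (by rw [abs_neg])
      _ ≤ (1/m1) * T (T (fun _ : Ω => (1:ℝ))) x + (1/m1) * (μx Set.univ).toReal :=
          add_le_add hb1 hb2
      _ = (1/m1) * (T (T (fun _ : Ω => (1:ℝ))) x + (μx Set.univ).toReal) := by ring
  have htend : Tendsto (fun n : ℕ => (1/((n:ℝ)+1)) *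
      (T (T (fun _ : Ω => (1:ℝ))) x + (μx Set.univ).toReal)) atTop (𝓝 0) := by
    have h1 := tendsto_one_div_add_atTop_nhds_zero_nat (𝕜 := ℝ)
    have h2 := h1.mul_const (T (T (fun _ : Ω => (1:ℝ))) x + (μx Set.univ).toReal)
    simpa using h2
  have habs : |T (T f) x - ∫ y, f y ∂μx| ≤ 0 := ge_of_tendsto' htend hmain
  have h0 := abs_nonneg (T (T f) x - ∫ y, f y ∂μx)
  have hz : T (T f) x - ∫ y, f y ∂μx = 0 := abs_eq_zero.mp (le_antisymm habs h0)
  linarith
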